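/- Suppose the Fréchet derivative f' is uniformly continuous on C, C is weakly compact, f is uniformly convex with modulus δ, g is Fréchet differentiable on C (so that a subgradient g'(x) exists at each point), and the stepsizes (γ_k) are chosen either by line minimization for φ = f + g or by the open loop rule. Then the composite problem min_{x∈C} φ(x) has a unique solution x*, and the sequence (x_k) generated by the generalized Frank–Wolfe algorithm converges to x* in norm. -/

import Mathlib

open Filter Topology Set

lemma grad_ineq' {X : Type*} [NormedAddCommGroup X] [NormedSpace ℝ X]
    (f : X → ℝ) (f' : X → X →L[ℝ] ℝ)
    (hconv : ConvexOn ℝ Set.univ f) (hderiv : ∀ x, HasFDerivAt f (f' x) x)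
    (u v : X) : f' u (v - u) ≤ f v - f u := by
  set φ : ℝ → ℝ := fun t => f (u + t • (v - u)) with hφdef
  have hline : HasDerivAt (fun t : ℝ => u + t • (v - u)) (v - u) 0 := by
    simpa using ((hasDerivAt_id (0:ℝ)).smul_const (v - u)).const_add u
  have hφ : HasDerivAt φ (f' u (v - u)) 0 := by
    have h := (by simpa using hderiv u :
      HasFDerivAt f (f' u) (u + (0:ℝ) • (v - u))).comp_hasDerivAt 0 hline
    exact h
  rw [hasDerivAt_iff_tendsto_slope] at hφ
  have hmono : 𝓝[>] (0:ℝ) ≤ 𝓝[≠] (0:ℝ) :=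
    nhdsWithin_mono 0 (fun t ht => ne_of_gt ht)
  refine le_of_tendsto (hφ.mono_left hmono) ?_
  filter_upwards [Ioc_mem_nhdsGT_of_mem (by simp : (0:ℝ) ∈ Ico (0:ℝ) 1)] with t ht
  have ht0 : 0 < t := ht.1
  have ht1 : t ≤ 1 := ht.2
  have hcx : φ t ≤ (1 - t) * f u + t * f v := by
    have h := hconv.2 (mem_univ u) (mem_univ v) (by linarith : (0:ℝ) ≤ 1 - t)
      ht0.le (by ring)
    have heq : (1 - t) • u + t • v = u + t • (v - u) := by module
    simpa [hφdef, heq, mul_comm] using h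
  have hφ0 : φ 0 = f u := by simp [hφdef]
  rw [slope_def_field]
  simp only [sub_zero]
  rw [div_le_iff₀ ht0]
  nlinarith

set_option maxHeartbeats 1000000 in
/-- **Norm convergence of generalized Frank–Wolfe iterates under uniform convexity**
(Theorem 5.3 (ii)). If `C` is weakly compact, `f'` is uniformly continuous on `C`, `f`
is uniformly convex with modulus `δ`, `g` is proper lsc convex, finite and Fréchet
differentiable on `C`, and the stepsizes are chosen either by line minimization for
`φ = f + g` or by the open loop rule, then the composite problem `min_C φ` has a unique
solution `x*` and the generalized Frank–Wolfe iterates converge to `x*` in norm. -/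
theorem stmt_17
    {X : Type*} [NormedAddCommGroup X] [NormedSpace ℝ X] [CompleteSpace X]
    (C : Set X) (hCne : C.Nonempty) (hCcl : IsClosed C)
    (hCbd : Bornology.IsBounded C) (hCcv : Convex ℝ C)
    (hCwc : IsCompact (⇑(toWeakSpace ℝ X) '' C))
    (f : X → ℝ) (f' : X → X →L[ℝ] ℝ)
    (hfconv : ConvexOn ℝ Set.univ f)
    (hfderiv : ∀ x : X, HasFDerivAt f (f' x) x)
    (hfUC : UniformContinuousOn f' C)
    (δ : ℝ → ℝ)
    (hδcont : ContinuousOn δ (Set.Ici 0)) (hδ0 : δ 0 = 0)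
    (hδpos : ∀ t > (0 : ℝ), 0 < δ t) (hδnonneg : ∀ t ≥ (0 : ℝ), 0 ≤ δ t)
    (hfUnifConv : ∀ z w : X, ∀ lam : ℝ, 0 < lam → lam < 1 →
      f (lam • z + (1 - lam) • w) ≤
        lam * f z + (1 - lam) * f w - lam * (1 - lam) * δ ‖z - w‖)
    (g : X → EReal)
    (hgproper : ∃ z : X, g z ≠ ⊤) (hgnebot : ∀ z : X, g z ≠ ⊥)
    (hglsc : LowerSemicontinuous g)
    (hgconv : ∀ z w : X, ∀ lam : ℝ, 0 < lam → lam < 1 →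
      g (lam • z + (1 - lam) • w) ≤ (lam : EReal) * g z + ((1 - lam : ℝ) : EReal) * g w)
    (hgC : ∀ z ∈ C, g z ≠ ⊤)
    (gr : X → ℝ) (g' : X → X →L[ℝ] ℝ)
    (hgr : ∀ z ∈ C, g z = (gr z : EReal))
    (hgderiv : ∀ z ∈ C, HasFDerivWithinAt gr (g' z) C z)
    (xstar : X) (hxstarC : xstar ∈ C)
    (hxstarmin : ∀ y ∈ C, (f xstar : EReal) + g xstar ≤ (f y : EReal) + g y)
    (x xbar : ℕ → X) (γ : ℕ → ℝ)
    (hx0 : x 0 ∈ C)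
    (hxbarC : ∀ k, xbar k ∈ C)
    (hxbarmin : ∀ k, ∀ y ∈ C,
      (f' (x k) (xbar k) : EReal) + g (xbar k) ≤ (f' (x k) y : EReal) + g y)
    (hupdate : ∀ k, x (k + 1) = x k + γ k • (xbar k - x k))
    (hstep :
      ((∀ k, γ k ∈ Set.Icc (0 : ℝ) 1) ∧
        ∀ k, ∀ γ' ∈ Set.Icc (0 : ℝ) 1,
          (f (x k + γ k • (xbar k - x k)) : EReal) + g (x k + γ k • (xbar k - x k)) ≤
            (f (x k + γ' • (xbar k - x k)) : EReal) + g (x k + γ' • (xbar k - x k)))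
      ∨ ((∀ k, γ k ∈ Set.Ioc (0 : ℝ) 1) ∧ Tendsto γ atTop (𝓝 0) ∧
          Tendsto (fun n => ∑ k ∈ Finset.range n, γ k) atTop atTop)) :
    (∀ z ∈ C, (∀ y ∈ C, (f z : EReal) + g z ≤ (f y : EReal) + g y) → z = xstar) ∧
      Tendsto x atTop (𝓝 xstar) := by
  -- diameter bound
  obtain ⟨D0, hD0⟩ := Metric.isBounded_iff.mp hCbd
  set D : ℝ := max D0 1 with hDdef
  have hD1 : (1:ℝ) ≤ D := le_max_right _ _
  have hDpos : (0:ℝ) < D := lt_of_lt_of_le one_pos hD1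
  have hDd : ∀ z ∈ C, ∀ w ∈ C, ‖z - w‖ ≤ D := fun z hz w hw => by
    rw [← dist_eq_norm]; exact (hD0 hz hw).trans (le_max_left _ _)
  set φr : X → ℝ := fun z => f z + gr z with hφrdef
  -- EReal to real conversion helper
  have hcoe : ∀ (p q : ℝ), ∀ z ∈ C, ∀ w ∈ C,
      (((p : EReal) + g z ≤ (q : EReal) + g w) ↔ p + gr z ≤ q + gr w) := by
    intro p q z hz w hw
    rw [hgr z hz, hgr w hw, ← EReal.coe_add, ← EReal.coe_add, EReal.coe_le_coe_iff]
  have hstar : ∀ y ∈ C, φr xstar ≤ φr y := fun y hy =>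
    (hcoe _ _ _ hxstarC _ hy).1 (hxstarmin y hy)
  have hxbarR : ∀ k, ∀ y ∈ C,
      f' (x k) (xbar k) + gr (xbar k) ≤ f' (x k) y + gr y := fun k y hy =>
    (hcoe _ _ _ (hxbarC k) _ hy).1 (hxbarmin k y hy)
  have hgrcvx : ∀ z ∈ C, ∀ w ∈ C, ∀ lam : ℝ, 0 < lam → lam < 1 →
      gr (lam • z + (1 - lam) • w) ≤ lam * gr z + (1 - lam) * gr w := by
    intro z hz w hw lam h0 h1
    have hmem : lam • z + (1 - lam) • w ∈ C := hCcv hz hw h0.le (by linarith) (by ring)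
    have h := hgconv z w lam h0 h1
    rw [hgr _ hmem, hgr _ hz, hgr _ hw, ← EReal.coe_mul, ← EReal.coe_mul,
      ← EReal.coe_add, EReal.coe_le_coe_iff] at h
    exact h
  have hcomb : ∀ z ∈ C, ∀ w ∈ C, ∀ γ' ∈ Icc (0:ℝ) 1, z + γ' • (w - z) ∈ C := by
    intro z hz w hw γ' hγ'
    have heq : z + γ' • (w - z) = (1 - γ') • z + γ' • w := by module
    rw [heq]; exact hCcv hz hw (by linarith [hγ'.2]) hγ'.1 (by ring)
  have hγIcc : ∀ k, γ k ∈ Icc (0:ℝ) 1 := by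
    rcases hstep with ⟨h, _⟩ | ⟨h, _⟩
    · exact h
    · exact fun k => ⟨(h k).1.le, (h k).2⟩
  have hxC : ∀ k, x k ∈ C := by
    intro k; induction k with
    | zero => exact hx0
    | succ n ih => rw [hupdate n]; exact hcomb _ ih _ (hxbarC n) _ (hγIcc n)
  set a : ℕ → ℝ := fun k => φr (x k) - φr xstar with hadef
  have ha0 : ∀ k, 0 ≤ a k := fun k => sub_nonneg.2 (hstar _ (hxC k))
  have hgrad : ∀ u v : X, f' u (v - u) ≤ f v - f u := grad_ineq' f f' hfconv hfderiv
  set G : ℕ → ℝ := fun k =>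
    f' (x k) (x k) - f' (x k) (xbar k) + gr (x k) - gr (xbar k) with hGdef
  clear_value D φr a G
  have hGa : ∀ k, a k ≤ G k := by
    intro k
    have h1 := hgrad (x k) xstar
    rw [map_sub] at h1
    have h2 := hxbarR k xstar hxstarC
    have ha' : a k = f (x k) + gr (x k) - (f xstar + gr xstar) := by simp only [hadef, hφrdef]
    have hG' : G k = f' (x k) (x k) - f' (x k) (xbar k) + gr (x k) - gr (xbar k) := by
      rw [hGdef]
    linarith
  -- descent inequality
  have hdesc : ∀ k, ∀ γ' ∈ Icc (0:ℝ) 1,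
      φr (x k + γ' • (xbar k - x k)) - φr xstar ≤
        (1 - γ') * a k + γ' * (‖f' (x k + γ' • (xbar k - x k)) - f' (x k)‖ * D) := by
    intro k γ' hγ'
    set y := x k + γ' • (xbar k - x k) with hy
    clear_value y
    have hyC : y ∈ C := by rw [hy]; exact hcomb _ (hxC k) _ (hxbarC k) _ hγ'
    have h1 := hgrad y (x k)
    have hxy : x k - y = -(γ' • (xbar k - x k)) := by rw [hy]; abel
    rw [hxy, map_neg, map_smul, smul_eq_mul] at h1
    have h1' : f y ≤ f (x k) + γ' * (f' y (xbar k - x k)) := by linarith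
    have hd : ‖xbar k - x k‖ ≤ D := hDd _ (hxbarC k) _ (hxC k)
    have hb0 : f' y (xbar k - x k) ≤ f' (x k) (xbar k - x k) + ‖f' y - f' (x k)‖ * D := by
      have e1 : f' y (xbar k - x k) - f' (x k) (xbar k - x k)
          = (f' y - f' (x k)) (xbar k - x k) := by simp
      have e2 : (f' y - f' (x k)) (xbar k - x k)
          ≤ ‖(f' y - f' (x k)) (xbar k - x k)‖ := le_abs_self _
      have e3 : ‖(f' y - f' (x k)) (xbar k - x k)‖
          ≤ ‖f' y - f' (x k)‖ * ‖xbar k - x k‖ := (f' y - f' (x k)).le_opNorm _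
      have e4 : ‖f' y - f' (x k)‖ * ‖xbar k - x k‖ ≤ ‖f' y - f' (x k)‖ * D :=
        mul_le_mul_of_nonneg_left hd (norm_nonneg _)
      linarith
    have hgy : gr y ≤ (1 - γ') * gr (x k) + γ' * gr (xbar k) := by
      rcases eq_or_lt_of_le hγ'.1 with h0 | h0
      · have : y = x k := by rw [hy, ← h0]; simp
        rw [this, ← h0]; ring_nf; exact le_refl _
      rcases eq_or_lt_of_le hγ'.2 with h1e | h1e
      · have : y = xbar k := by rw [hy, h1e]; simp
        rw [this, h1e]; ring_nf; exact le_refl _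
      · have heq : y = γ' • (xbar k) + (1 - γ') • (x k) := by rw [hy]; module
        have := hgrcvx _ (hxbarC k) _ (hxC k) γ' h0 h1e
        rw [heq]; linarith
    have e5 : γ' * f' y (xbar k - x k)
        ≤ γ' * f' (x k) (xbar k - x k) + γ' * (‖f' y - f' (x k)‖ * D) := by
      have := mul_le_mul_of_nonneg_left hb0 hγ'.1
      nlinarith [this]
    have e6 : γ' * a k ≤ γ' * G k := mul_le_mul_of_nonneg_left (hGa k) hγ'.1
    have e7 : f' (x k) (xbar k - x k) = f' (x k) (xbar k) - f' (x k) (x k) := map_sub _ _ _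
    have hG' : G k = f' (x k) (x k) - f' (x k) (xbar k) + gr (x k) - gr (xbar k) := by
      rw [hGdef]
    have ha' : a k = f (x k) + gr (x k) - (f xstar + gr xstar) := by simp only [hadef, hφrdef]
    have hφy : φr y = f y + gr y := by simp only [hφrdef]
    have hφ' : φr xstar = f xstar + gr xstar := by simp only [hφrdef]
    have hgG : γ' * gr (xbar k) - γ' * gr (x k) + γ' * f' (x k) (xbar k - x k)
        = -(γ' * G k) := by rw [hG', e7]; ring
    rw [hφy, hφ']
    nlinarith [e5, e6, h1', hgy, hgG]
  -- uniform continuity, metric form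
  have hUC : ∀ ε > (0:ℝ), ∃ η > (0:ℝ), ∀ p ∈ C, ∀ q ∈ C,
      ‖p - q‖ < η → ‖f' p - f' q‖ < ε := by
    intro ε hε
    rw [Metric.uniformContinuousOn_iff] at hfUC
    obtain ⟨η, hη, h⟩ := hfUC ε hε
    refine ⟨η, hη, fun p hp q hq hpq => ?_⟩
    have := h p hp q hq (by rwa [dist_eq_norm])
    rwa [dist_eq_norm] at this
  -- key descent with error ε/2 for small stepsizes
  have hkey : ∀ ε > (0:ℝ), ∃ γ0 > (0:ℝ), γ0 ≤ 1 ∧ ∀ k, ∀ γ' : ℝ, 0 < γ' → γ' ≤ γ0 →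
      φr (x k + γ' • (xbar k - x k)) - φr xstar ≤ (1 - γ') * a k + γ' * (ε/2) := by
    intro ε hε
    obtain ⟨η, hη, hUCε⟩ := hUC (ε/(2*D)) (by positivity)
    refine ⟨min 1 (η/(2*D)), by positivity, min_le_left _ _, ?_⟩
    intro k γ' h0 hle
    have hγ1 : γ' ≤ 1 := hle.trans (min_le_left _ _)
    have hγη : γ' ≤ η/(2*D) := hle.trans (min_le_right _ _)
    set y := x k + γ' • (xbar k - x k) with hy
    clear_value y
    have hyC : y ∈ C := by rw [hy]; exact hcomb _ (hxC k) _ (hxbarC k) _ ⟨h0.le, hγ1⟩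
    have hdist : ‖y - x k‖ < η := by
      have heq : y - x k = γ' • (xbar k - x k) := by rw [hy]; abel
      rw [heq, norm_smul, Real.norm_eq_abs, abs_of_pos h0]
      calc γ' * ‖xbar k - x k‖ ≤ (η/(2*D)) * D := by
            apply mul_le_mul hγη (hDd _ (hxbarC k) _ (hxC k)) (norm_nonneg _)
            positivity
        _ = η/2 := by field_simp
        _ < η := by linarith
    have herr : ‖f' y - f' (x k)‖ < ε/(2*D) := hUCε _ hyC _ (hxC k) hdist
    have herr2 : ‖f' y - f' (x k)‖ * D ≤ ε/2 := by
      calc ‖f' y - f' (x k)‖ * D ≤ (ε/(2*D)) * D :=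
            mul_le_mul_of_nonneg_right herr.le hDpos.le
        _ = ε/2 := by field_simp
    have hmgoal := hdesc k γ' ⟨h0.le, hγ1⟩
    rw [← hy] at hmgoal
    have h8 := mul_le_mul_of_nonneg_left herr2 h0.le
    exact hmgoal.trans (add_le_add (le_refl _) h8)
  -- main: a k eventually below any ε
  have hat : ∀ ε > (0:ℝ), ∃ N, ∀ k ≥ N, a k < ε := by
    intro ε hε
    obtain ⟨γ0, hγ0pos, hγ01, hk⟩ := hkey ε hε
    rcases hstep with ⟨hγI, hls⟩ | ⟨hγIoc, hγ0lim, hγsum⟩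
    · -- line minimization
      have hlsR : ∀ k, ∀ γ' ∈ Icc (0:ℝ) 1,
          φr (x (k+1)) ≤ φr (x k + γ' • (xbar k - x k)) := by
        intro k γ' hγ'
        have hm1 : x k + γ k • (xbar k - x k) ∈ C :=
          hcomb _ (hxC k) _ (hxbarC k) _ (hγIcc k)
        have hm2 : x k + γ' • (xbar k - x k) ∈ C := hcomb _ (hxC k) _ (hxbarC k) _ hγ'
        rw [hupdate k]
        simp only [hφrdef]
        exact (hcoe _ _ _ hm1 _ hm2).1 (hls k γ' hγ')
      have hrec : ∀ k, a (k+1) ≤ (1 - γ0) * a k + γ0 * (ε/2) := by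
        intro k
        have h1 := hlsR k γ0 ⟨hγ0pos.le, hγ01⟩
        have h2 := hk k γ0 hγ0pos le_rfl
        have ha1 : a (k+1) = φr (x (k+1)) - φr xstar := by rw [hadef]
        linarith only [h1, h2, ha1, hGa k, ha0 k]
      have hpow : ∀ k, a k ≤ ε/2 + (1-γ0)^k * a 0 := by
        intro k; induction k with
        | zero => simp; linarith [ha0 0]
        | succ n ih =>
          have h1 := hrec n
          have h2 : (1-γ0) * a n ≤ (1-γ0) * (ε/2 + (1-γ0)^n * a 0) :=
            mul_le_mul_of_nonneg_left ih (by linarith)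
          calc a (n+1) ≤ (1-γ0)*a n + γ0*(ε/2) := h1
            _ ≤ (1-γ0)*(ε/2 + (1-γ0)^n * a 0) + γ0*(ε/2) := by linarith
            _ = ε/2 + (1-γ0)^(n+1) * a 0 := by ring
      have htend : Tendsto (fun k => (1-γ0)^k * a 0) atTop (𝓝 0) := by
        have h := tendsto_pow_atTop_nhds_zero_of_lt_one (by linarith : (0:ℝ) ≤ 1 - γ0)
          (by linarith : 1 - γ0 < 1)
        simpa using h.mul_const (a 0)
      have hev : ∀ᶠ k in atTop, (1-γ0)^k * a 0 < ε/2 :=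
        htend.eventually_lt_const (by linarith)
      obtain ⟨N, hN⟩ := eventually_atTop.mp hev
      exact ⟨N, fun k hk' => lt_of_le_of_lt (hpow k) (by linarith [hN k hk'])⟩
    · -- open loop
      have hev : ∀ᶠ k in atTop, γ k < γ0 := hγ0lim.eventually_lt_const hγ0pos
      obtain ⟨K, hK⟩ := eventually_atTop.mp hev
      have hrecK : ∀ k, K ≤ k → a (k+1) ≤ (1 - γ k) * a k + γ k * (ε/2) := by
        intro k hk'
        have h2 := hk k (γ k) (hγIoc k).1 (hK k hk').le
        have ha1 : a (k+1) = φr (x (k+1)) - φr xstar := by rw [hadef]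
        rw [hupdate k] at ha1
        linarith
      -- exists N ≥ K with a N < ε
      have hexN : ∃ N, K ≤ N ∧ a N < ε := by
        by_contra hcon
        push_neg at hcon
        have hge : ∀ n, K ≤ n → ε ≤ a n := fun n hn => hcon n hn
        have htel : ∀ n, a (K+n) ≤ a K - (ε/2) * ∑ i ∈ Finset.range n, γ (K+i) := by
          intro n; induction n with
          | zero => simp
          | succ m ih =>
            have hgem : ε ≤ a (K+m) := hge _ (Nat.le_add_right K m)
            have h1 := hrecK (K+m) (Nat.le_add_right K m)
            have hγm1 : 0 < γ (K+m) := (hγIoc (K+m)).1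
            have hstep2 : a (K+m+1) ≤ a (K+m) - γ (K+m) * (ε/2) := by
              nlinarith [mul_nonneg hγm1.le (by linarith : (0:ℝ) ≤ a (K+m) - ε)]
            have heq : K + (m+1) = (K + m) + 1 := by omega
            rw [heq, Finset.sum_range_succ]
            linarith
        have hsplit : ∀ n, ∑ i ∈ Finset.range n, γ (K+i)
            = (∑ j ∈ Finset.range (K+n), γ j) - ∑ j ∈ Finset.range K, γ j := by
          intro n; induction n with
          | zero => simp
          | succ m ih =>
            rw [Finset.sum_range_succ, ih, show K + (m+1) = (K+m) + 1 from by omega,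
              Finset.sum_range_succ]
            ring
        have hT : Tendsto (fun n => ∑ i ∈ Finset.range n, γ (K+i)) atTop atTop := by
          have h2 : Tendsto (fun n => ∑ j ∈ Finset.range (K+n), γ j) atTop atTop := by
            have := hγsum.comp (tendsto_add_atTop_nat K)
            exact this.congr (fun n => by simp [Nat.add_comm])
          have h3 := tendsto_atTop_add_const_right atTop
            (-(∑ j ∈ Finset.range K, γ j)) h2
          exact h3.congr (fun n => by rw [hsplit n]; ring)
        obtain ⟨n, hn⟩ := (hT.eventually_gt_atTop ((a K)/(ε/2))).exists
        have h4 := htel n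
        have h5 : a K < (ε/2) * ∑ i ∈ Finset.range n, γ (K+i) := by
          rw [div_lt_iff₀ (by linarith : (0:ℝ) < ε/2)] at hn
          linarith [hn]
        have h6 : a (K+n) < 0 := by linarith
        exact absurd (ha0 (K+n)) h6.not_ge
      obtain ⟨N, hNK, hNa⟩ := hexN
      refine ⟨N, fun k hk' => ?_⟩
      induction k with
      | zero =>
        have : N = 0 := Nat.le_zero.mp hk'
        rwa [← this]
      | succ m ih =>
        rcases Nat.lt_or_ge N (m+1) with hlt | hge2
        · have hm : N ≤ m := Nat.lt_succ_iff.mp hlt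
          have iham := ih hm
          have hKm : K ≤ m := hNK.trans hm
          have h1 := hrecK m hKm
          have hγm := hγIoc m
          have hγ1 : 0 < γ m := hγm.1
          have hγ2 : γ m ≤ 1 := hγm.2
          nlinarith [mul_nonneg hγ1.le (by linarith : (0:ℝ) ≤ ε - a m),
            mul_pos hγ1 (by linarith : (0:ℝ) < ε/2), ha0 m,
            mul_nonneg (by linarith : (0:ℝ) ≤ 1 - γ m) (by linarith : (0:ℝ) ≤ ε - a m)]
        · have : N = m + 1 := le_antisymm hk' hge2
          rwa [← this]
  -- uniform convexity consequence
  have hucv : ∀ z ∈ C, δ ‖z - xstar‖ ≤ 2 * (φr z - φr xstar) := by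
    intro z hz
    rcases eq_or_ne z xstar with rfl | hne
    · simp [hδ0]
    · have hpC : (1/2:ℝ) • z + (1 - (1/2:ℝ)) • xstar ∈ C :=
        hCcv hz hxstarC (by norm_num) (by norm_num) (by ring)
      have hf := hfUnifConv z xstar (1/2) (by norm_num) (by norm_num)
      have hg2 := hgrcvx z hz xstar hxstarC (1/2) (by norm_num) (by norm_num)
      have hm := hstar _ hpC
      have hφp : φr ((1/2:ℝ) • z + (1 - (1/2:ℝ)) • xstar)
          = f ((1/2:ℝ) • z + (1 - (1/2:ℝ)) • xstar)
            + gr ((1/2:ℝ) • z + (1 - (1/2:ℝ)) • xstar) := by simp only [hφrdef]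
      have hφz : φr z = f z + gr z := by simp only [hφrdef]
      have hφs : φr xstar = f xstar + gr xstar := by simp only [hφrdef]
      rw [hφp] at hm
      rw [hφz, hφs]
      linarith [hδnonneg ‖z - xstar‖ (norm_nonneg _), hf, hg2, hm]
  constructor
  · -- uniqueness
    intro z hz hzmin
    have h1 : φr z ≤ φr xstar := by
      simp only [hφrdef]
      exact (hcoe _ _ _ hz _ hxstarC).1 (hzmin xstar hxstarC)
    have h2 := hucv z hz
    by_contra hne
    have hpos : 0 < ‖z - xstar‖ := by
      rw [norm_sub_pos_iff]; exact hne
    have := hδpos _ hpos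
    linarith
  · -- convergence
    rw [Metric.tendsto_atTop]
    intro ε hε
    rcases le_or_gt ε D with hεD | hεD
    · have hIcc : (Icc ε D).Nonempty := ⟨ε, le_refl ε, hεD⟩
      have hsub : Icc ε D ⊆ Ici 0 := fun t ht => le_trans hε.le ht.1
      obtain ⟨t0, ht0, hmin⟩ := isCompact_Icc.exists_isMinOn hIcc (hδcont.mono hsub)
      have hm : 0 < δ t0 := hδpos t0 (lt_of_lt_of_le hε ht0.1)
      obtain ⟨N, hN⟩ := hat (δ t0 / 2) (by linarith)
      refine ⟨N, fun n hn => ?_⟩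
      rw [dist_eq_norm]
      by_contra hge
      push_neg at hge
      have hle : ‖x n - xstar‖ ≤ D := hDd _ (hxC n) _ hxstarC
      have h1 : δ t0 ≤ δ ‖x n - xstar‖ := isMinOn_iff.mp hmin _ ⟨hge, hle⟩
      have h2 := hucv (x n) (hxC n)
      have h3 := hN n hn
      have ha' : a n = φr (x n) - φr xstar := by rw [hadef]
      linarith
    · exact ⟨0, fun n _ => by
        rw [dist_eq_norm]
        exact lt_of_le_of_lt (hDd _ (hxC n) _ hxstarC) hεD⟩
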